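/- Let α > 0 and β > 0 be real numbers, let k > 0, let q ∈ (0,1), and let λ > 0 and μ > 0 be real numbers. Then for all x, y with 0 < x < y < 1, the following strict double inequality holds: α^λ·e^{−(λγ/k)βx}·Γ_k(α)^λ / ((α+βx)^λ·k^{−(λ/k)βx}·(1−q)^{−(μ/k)βx}·Γ_{(q,k)}(α)^μ) < Γ_k(α+βx)^λ / Γ_{(q,k)}(α+βx)^μ < (α+βy)^λ·e^{(λγ/k)β(y−x)}·Γ_k(α+βy)^λ / ((α+βx)^λ·k^{(λ/k)β(y−x)}·(1−q)^{(μ/k)β(y−x)}·Γ_{(q,k)}(α+βy)^μ). -/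

import Mathlib

open Real

/-- `[p]_q = (1 - q^p)/(1 - q)` -/
noncomputable def pnq (p : ℕ) (q : ℝ) : ℝ := (1 - q ^ p) / (1 - q)

/-- q-psi function via its series representation. -/
noncomputable def psiq (q s : ℝ) : ℝ :=
  -Real.log (1 - q) + Real.log q * ∑' n : ℕ, q ^ (((n : ℝ) + 1) * s) / (1 - q ^ (n + 1))

/-- (p,q)-psi function via its series representation. -/
noncomputable def psipq (p : ℕ) (q s : ℝ) : ℝ :=
  Real.log (pnq p q) +
    Real.log q * ∑ n ∈ Finset.range p, q ^ (((n : ℝ) + 1) * s) / (1 - q ^ (n + 1))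

/-- k-psi function via its series representation. -/
noncomputable def psik (k s : ℝ) : ℝ :=
  (Real.log k - Real.eulerMascheroniConstant) / k - 1 / s +
    ∑' n : ℕ, s / (((n : ℝ) + 1) * k * (((n : ℝ) + 1) * k + s))

/-- (q,k)-psi function via its series representation. -/
noncomputable def psiqk (q k s : ℝ) : ℝ :=
  -Real.log (1 - q) / k +
    Real.log q * ∑' n : ℕ, q ^ (((n : ℝ) + 1) * k * s) / (1 - q ^ (((n : ℝ) + 1) * k))

/-- Normalized q-Gamma function. -/
noncomputable def Gammaq (q s : ℝ) : ℝ :=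
  (1 - q) ^ (-s) *
    Real.exp (∑' n : ℕ, q ^ (((n : ℝ) + 1) * s) / (((n : ℝ) + 1) * (1 - q ^ (n + 1))))

/-- Normalized (p,q)-Gamma function. -/
noncomputable def Gammapq (p : ℕ) (q s : ℝ) : ℝ :=
  (pnq p q) ^ s *
    Real.exp (∑ n ∈ Finset.range p, q ^ (((n : ℝ) + 1) * s) / (((n : ℝ) + 1) * (1 - q ^ (n + 1))))

/-- Normalized (q,k)-Gamma function. -/
noncomputable def Gammaqk (q k s : ℝ) : ℝ :=
  (1 - q) ^ (-s / k) *
    Real.exp (∑' n : ℕ,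
      q ^ (((n : ℝ) + 1) * k * s) / (((n : ℝ) + 1) * k * (1 - q ^ (((n : ℝ) + 1) * k))))

/-- k-Gamma function. -/
noncomputable def Gammak (k s : ℝ) : ℝ :=
  ∫ x in Set.Ioi (0 : ℝ), Real.exp (-(x ^ k) / k) * x ^ (s - 1)

open Filter Finset Topology MeasureTheory Set

lemma harmonic_cast (n : ℕ) : ((harmonic n : ℚ) : ℝ) = ∑ i ∈ Finset.range n, (1:ℝ)/(i+1) := by
  rw [harmonic]
  push_cast
  simp [one_div]

lemma log_GammaSeq (x : ℝ) (hx : 0 < x) (n : ℕ) (hn : 1 ≤ n) :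
    Real.log (Real.GammaSeq x n) =
      x * Real.log n + Real.log (Nat.factorial n : ℝ) -
        ∑ j ∈ Finset.range (n+1), Real.log (x + j) := by
  have hn0 : (0:ℝ) < n := by exact_mod_cast hn
  have hfac : (0:ℝ) < (Nat.factorial n : ℝ) := by exact_mod_cast Nat.factorial_pos n
  have hprod : ∀ j ∈ Finset.range (n+1), x + (j:ℝ) ≠ 0 := by
    intro j _; positivity
  rw [Real.GammaSeq, Real.log_div (by positivity) (Finset.prod_ne_zero_iff.mpr hprod),
    Real.log_mul (by positivity) (by positivity), Real.log_rpow hn0, Real.log_prod hprod]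

lemma gamma_combo_mono {u v : ℝ} (hu : 0 < u) (huv : u < v) :
    Real.log (Real.Gamma u) + Real.log u + Real.eulerMascheroniConstant * u <
    Real.log (Real.Gamma v) + Real.log v + Real.eulerMascheroniConstant * v := by
  set γ := Real.eulerMascheroniConstant with hγ
  set L : ℝ := Real.log (Real.Gamma v) + Real.log v - (Real.log (Real.Gamma u) + Real.log u)
    with hL
  set D : ℕ → ℝ := fun n =>
    (v - u) * Real.log n - ∑ j ∈ Finset.range n, (Real.log (v + (j+1)) - Real.log (u + (j+1)))
    with hDdef
  have hv : 0 < v := hu.trans huv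
  have hD : Tendsto D atTop (𝓝 L) := by
    have h1 : Tendsto (fun n => Real.log (Real.GammaSeq v n) - Real.log (Real.GammaSeq u n))
        atTop (𝓝 (Real.log (Real.Gamma v) - Real.log (Real.Gamma u))) := by
      exact ((Real.continuousAt_log (Real.Gamma_pos_of_pos hv).ne').tendsto.comp
        (Real.GammaSeq_tendsto_Gamma v)).sub
        ((Real.continuousAt_log (Real.Gamma_pos_of_pos hu).ne').tendsto.comp
        (Real.GammaSeq_tendsto_Gamma u))
    have h2 : Tendsto (fun n => Real.log (Real.GammaSeq v n) - Real.log (Real.GammaSeq u n)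
        + (Real.log v - Real.log u)) atTop (𝓝 L) := by
      convert h1.add (tendsto_const_nhds (x := Real.log v - Real.log u)) using 1
      rw [hL]; ring
    apply h2.congr'
    filter_upwards [eventually_ge_atTop 1] with n hn
    rw [log_GammaSeq u hu n hn, log_GammaSeq v hv n hn,
        Finset.sum_range_succ' (fun j => Real.log (u + (j:ℕ))) n,
        Finset.sum_range_succ' (fun j => Real.log (v + (j:ℕ))) n]
    simp only [hDdef, Finset.sum_sub_distrib]
    push_cast
    ring_nf
  set E : ℕ → ℝ := fun n =>
    (v - u) * (u/(u+1) - (((harmonic n : ℚ) : ℝ) - Real.log n)) with hEdef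
  have hE : Tendsto E atTop (𝓝 ((v - u) * (u/(u+1) - γ))) := by
    exact (tendsto_const_nhds.sub Real.tendsto_harmonic_sub_log).const_mul (v - u)
  have hle : E ≤ᶠ[atTop] D := by
    filter_upwards [eventually_ge_atTop 1] with n hn
    have hterm : ∀ j ∈ Finset.range n,
        0 ≤ (v - u)/((j:ℝ)+1) - (Real.log (v + ((j:ℝ)+1)) - Real.log (u + ((j:ℝ)+1))) := by
      intro j _
      have hc : (0:ℝ) < (j:ℝ) + 1 := by positivity
      have h1 : Real.log (v + ((j:ℝ)+1)) - Real.log (u + ((j:ℝ)+1)) ≤ (v - u)/(u + ((j:ℝ)+1)) := by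
        rw [← Real.log_div (by positivity) (by positivity)]
        have := Real.log_le_sub_one_of_pos
          (show 0 < (v + ((j:ℝ)+1))/(u + ((j:ℝ)+1)) by positivity)
        have heq : (v + ((j:ℝ)+1))/(u + ((j:ℝ)+1)) - 1 = (v - u)/(u + ((j:ℝ)+1)) := by
          field_simp
          ring
        linarith [this, heq.ge]
      have h2 : (v - u)/(u + ((j:ℝ)+1)) ≤ (v - u)/((j:ℝ)+1) := by
        apply div_le_div_of_nonneg_left (by linarith) hc (by linarith)
      linarith
    have h0mem : (0:ℕ) ∈ Finset.range n := Finset.mem_range.mpr hn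
    have hsingle := Finset.single_le_sum hterm h0mem
    have h0bound : (v - u) * (u/(u+1)) ≤
        (v - u)/(((0:ℕ):ℝ)+1) - (Real.log (v + (((0:ℕ):ℝ)+1)) - Real.log (u + (((0:ℕ):ℝ)+1))) := by
      have h1 : Real.log (v + 1) - Real.log (u + 1) ≤ (v - u)/(u + 1) := by
        rw [← Real.log_div (by positivity) (by positivity)]
        have := Real.log_le_sub_one_of_pos (show 0 < (v + 1)/(u + 1) by positivity)
        have heq : (v + 1)/(u + 1) - 1 = (v - u)/(u + 1) := by field_simp; ring
        linarith [this, heq.ge]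
      have heq2 : (v - u) * (u/(u+1)) = (v - u)/1 - (v - u)/(u+1) := by field_simp; ring
      push_cast
      rw [heq2]
      linarith
    have hsum : (v - u) * (u/(u+1)) ≤
        ∑ j ∈ Finset.range n,
          ((v - u)/((j:ℝ)+1) - (Real.log (v + ((j:ℝ)+1)) - Real.log (u + ((j:ℝ)+1)))) := by
      calc (v - u) * (u/(u+1)) ≤ _ := h0bound
        _ ≤ _ := hsingle
    simp only [hEdef, hDdef]
    rw [harmonic_cast]
    have hmul : (v - u) * ∑ i ∈ Finset.range n, (1:ℝ)/((i:ℝ)+1)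
        = ∑ i ∈ Finset.range n, (v-u)/((i:ℝ)+1) := by
      rw [Finset.mul_sum]; exact Finset.sum_congr rfl (fun i _ => by ring)
    rw [Finset.sum_sub_distrib] at hsum
    linarith [hsum, hmul]
  have hbound : (v - u) * (u/(u+1) - γ) ≤ L := le_of_tendsto_of_tendsto hE hD hle
  have hpos : 0 < (v - u) * (u/(u+1)) := by
    have : 0 < v - u := by linarith
    positivity
  nlinarith [hbound, hpos]


lemma Gammak_eq {k s : ℝ} (hk : 0 < k) (hs : 0 < s) :
    Gammak k s = k ^ (s/k - 1) * Real.Gamma (s/k) := by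
  have h1 : Gammak k s = ∫ y in Ioi (0:ℝ), (1/k) * (Real.exp (-(y/k)) * y ^ (s/k - 1)) := by
    rw [Gammak, ← MeasureTheory.integral_comp_rpow_Ioi
      (fun y => (1/k) * (Real.exp (-(y/k)) * y ^ (s/k - 1))) hk.ne']
    refine setIntegral_congr_fun measurableSet_Ioi (fun x hx => ?_)
    have hx0 : (0:ℝ) < x := hx
    have hxx : x ^ (k-1) * x ^ (s-k) = x ^ (s-1) := by
      rw [← Real.rpow_add hx0]; ring_nf
    rw [smul_eq_mul, abs_of_pos hk, ← Real.rpow_mul hx0.le,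
      show k*(s/k-1) = s-k from by field_simp, ← hxx, neg_div]
    field_simp
  rw [h1, MeasureTheory.integral_const_mul]
  have h2 : ∫ y in Ioi (0:ℝ), Real.exp (-(y/k)) * y ^ (s/k - 1)
      = (1/(1/k)) ^ (s/k) * Real.Gamma (s/k) := by
    rw [← Real.integral_rpow_mul_exp_neg_mul_Ioi (by positivity : 0 < s/k)
      (by positivity : 0 < 1/k)]
    refine setIntegral_congr_fun measurableSet_Ioi (fun x hx => ?_)
    rw [mul_comm]
    congr 2
    field_simp
  rw [h2]
  rw [one_div_one_div]
  rw [← mul_assoc]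
  congr 1
  rw [Real.rpow_sub hk, Real.rpow_one]
  ring

lemma Gammak_pos {k s : ℝ} (hk : 0 < k) (hs : 0 < s) : 0 < Gammak k s := by
  rw [Gammak_eq hk hs]
  have := Real.Gamma_pos_of_pos (show 0 < s/k by positivity)
  positivity


section qside
variable {q k : ℝ} (hq0 : 0 < q) (hq1 : q < 1) (hk : 0 < k)

lemma Gammaqk_pos (hq1 : q < 1) : 0 < Gammaqk q k s := by
  have h1q : (0:ℝ) < 1 - q := by linarith
  exact mul_pos (rpow_pos_of_pos h1q _) (exp_pos _)

include hq0 hq1 hk in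
lemma qk_summable {s : ℝ} (hs : 0 < s) :
    Summable (fun n : ℕ =>
      q ^ (((n : ℝ) + 1) * k * s) / (((n : ℝ) + 1) * k * (1 - q ^ (((n : ℝ) + 1) * k)))) := by
  have hqk : q ^ k < 1 := Real.rpow_lt_one hq0.le hq1 hk
  have hr1 : q ^ (k*s) < 1 := Real.rpow_lt_one hq0.le hq1 (by positivity)
  have hr0 : 0 < q ^ (k*s) := Real.rpow_pos_of_pos hq0 _
  have h1qk : (0:ℝ) < 1 - q ^ k := by linarith
  have hgeom : Summable (fun n : ℕ => (1/(k*(1-q^k))) * (q^(k*s))^(n+1)) := by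
    simp only [pow_succ]
    exact ((summable_geometric_of_lt_one hr0.le hr1).mul_right _).mul_left _
  have hden : ∀ n : ℕ, k * (1 - q ^ k) ≤ ((n:ℝ) + 1) * k * (1 - q ^ (((n:ℝ) + 1) * k)) := by
    intro n
    have hnk : k ≤ ((n:ℝ) + 1) * k := by nlinarith [Nat.cast_nonneg (α := ℝ) n]
    have hqnk : q ^ (((n:ℝ) + 1) * k) ≤ q ^ k :=
      Real.rpow_le_rpow_of_exponent_ge hq0 hq1.le hnk
    have h2 : 1 - q ^ k ≤ 1 - q ^ (((n:ℝ) + 1) * k) := by linarith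
    calc k * (1 - q ^ k) ≤ ((n:ℝ)+1) * k * (1 - q ^ k) := by
          nlinarith [Nat.cast_nonneg (α := ℝ) n]
      _ ≤ _ := mul_le_mul_of_nonneg_left h2 (by positivity)
  refine Summable.of_nonneg_of_le (fun n => ?_) (fun n => ?_) hgeom
  · exact div_nonneg (Real.rpow_pos_of_pos hq0 _).le (le_trans (by positivity) (hden n))
  · have hnum : q ^ (((n:ℝ) + 1) * k * s) = (q ^ (k*s)) ^ (n+1) := by
      rw [← Real.rpow_natCast (q ^ (k*s)) (n+1), ← Real.rpow_mul hq0.le]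
      push_cast
      ring_nf
    calc q ^ (((n:ℝ) + 1) * k * s) / (((n:ℝ) + 1) * k * (1 - q ^ (((n:ℝ) + 1) * k)))
        ≤ q ^ (((n:ℝ) + 1) * k * s) / (k * (1 - q ^ k)) :=
          div_le_div_of_nonneg_left (by positivity) (by positivity) (hden n)
      _ = 1/(k*(1-q^k)) * (q^(k*s))^(n+1) := by rw [hnum]; ring


include hq0 hq1 hk in
lemma log_Gammaqk_eq (x : ℝ) :
    Real.log (Gammaqk q k x) = (-x/k) * Real.log (1 - q) +
      ∑' n : ℕ, q ^ (((n : ℝ) + 1) * k * x) / (((n : ℝ) + 1) * k * (1 - q ^ (((n : ℝ) + 1) * k))) := by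
  have h1q : (0:ℝ) < 1 - q := by linarith
  rw [Gammaqk, Real.log_mul (by positivity) (Real.exp_ne_zero _), Real.log_rpow h1q,
    Real.log_exp]

include hq0 hq1 hk in
lemma log_Gammaqk_lt {s t : ℝ} (hs : 0 < s) (hst : s < t) :
    Real.log (Gammaqk q k t) < Real.log (Gammaqk q k s) - ((t - s)/k) * Real.log (1 - q) := by
  have ht : 0 < t := hs.trans hst
  have hqk : q ^ k < 1 := Real.rpow_lt_one hq0.le hq1 hk
  have hdenpos : ∀ n : ℕ, 0 < ((n : ℝ) + 1) * k * (1 - q ^ (((n : ℝ) + 1) * k)) := by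
    intro n
    have h1 : q ^ (((n:ℝ) + 1) * k) ≤ q ^ k :=
      Real.rpow_le_rpow_of_exponent_ge hq0 hq1.le (by nlinarith [Nat.cast_nonneg (α := ℝ) n])
    have : q ^ (((n:ℝ) + 1) * k) < 1 := lt_of_le_of_lt h1 hqk
    have hn1 : (0:ℝ) < (n:ℝ) + 1 := by positivity
    exact mul_pos (mul_pos hn1 hk) (by linarith)
  have hS : (∑' n : ℕ, q ^ (((n : ℝ) + 1) * k * t) / (((n : ℝ) + 1) * k * (1 - q ^ (((n : ℝ) + 1) * k))))
      < ∑' n : ℕ, q ^ (((n : ℝ) + 1) * k * s) / (((n : ℝ) + 1) * k * (1 - q ^ (((n : ℝ) + 1) * k))) := by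
    have key : ∀ n : ℕ, q ^ (((n : ℝ) + 1) * k * t) < q ^ (((n : ℝ) + 1) * k * s) := by
      intro n
      apply Real.rpow_lt_rpow_of_exponent_gt hq0 hq1
      have hn1 : (0:ℝ) < (n:ℝ) + 1 := by positivity
      exact mul_lt_mul_of_pos_left hst (by positivity)
    refine Summable.tsum_lt_tsum (i := 0) (fun n => ?_) ?_ (qk_summable hq0 hq1 hk ht)
      (qk_summable hq0 hq1 hk hs)
    · exact (div_le_div_iff_of_pos_right (hdenpos n)).mpr (key n).le
    · exact (div_lt_div_iff_of_pos_right (hdenpos 0)).mpr (key 0)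
  have h1 := log_Gammaqk_eq hq0 hq1 hk (q := q) (k := k) s
  have h2 := log_Gammaqk_eq hq0 hq1 hk (q := q) (k := k) t
  have hexp : (-t/k) * Real.log (1-q) = (-s/k) * Real.log (1-q) - ((t-s)/k) * Real.log (1-q) := by
    ring
  linarith [hS]

end qside

lemma log_Gammak_gt {k s t : ℝ} (hk : 0 < k) (hs : 0 < s) (hst : s < t) :
    Real.log s - Real.log t + ((t - s)/k) * (Real.log k - Real.eulerMascheroniConstant) <
      Real.log (Gammak k t) - Real.log (Gammak k s) := by
  have ht : 0 < t := hs.trans hst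
  have hu : 0 < s / k := by positivity
  have huv : s / k < t / k := (div_lt_div_iff_of_pos_right hk).mpr hst
  have hcombo := gamma_combo_mono hu huv
  have hlogs : Real.log (s/k) = Real.log s - Real.log k := Real.log_div hs.ne' hk.ne'
  have hlogt : Real.log (t/k) = Real.log t - Real.log k := Real.log_div ht.ne' hk.ne'
  rw [Gammak_eq hk hs, Gammak_eq hk ht,
     Real.log_mul (Real.rpow_pos_of_pos hk _).ne' (Real.Gamma_pos_of_pos hu).ne',
     Real.log_mul (Real.rpow_pos_of_pos hk _).ne'
       (Real.Gamma_pos_of_pos (hu.trans huv)).ne',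
     Real.log_rpow hk, Real.log_rpow hk]
  rw [hlogs, hlogt] at hcombo
  ring_nf at hcombo ⊢
  linarith

theorem stmt15 (a b : ℝ) (ha : 0 < a) (hb : 0 < b)
    (k : ℝ) (hk : 0 < k) (q : ℝ) (hq : q ∈ Set.Ioo (0 : ℝ) 1)
    (lam mu : ℝ) (hlam : 0 < lam) (hmu : 0 < mu)
    (x y : ℝ) (hx : 0 < x) (hxy : x < y) (hy : y < 1) :
    a ^ lam * Real.exp (-(lam * Real.eulerMascheroniConstant / k * b * x)) *
        (Gammak k a) ^ lam /
        ((a + b * x) ^ lam * k ^ (-(lam / k * b * x)) * (1 - q) ^ (-(mu / k * b * x)) *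
          (Gammaqk q k a) ^ mu) <
      (Gammak k (a + b * x)) ^ lam / (Gammaqk q k (a + b * x)) ^ mu ∧
    (Gammak k (a + b * x)) ^ lam / (Gammaqk q k (a + b * x)) ^ mu <
      (a + b * y) ^ lam * Real.exp (lam * Real.eulerMascheroniConstant / k * b * (y - x)) *
        (Gammak k (a + b * y)) ^ lam /
        ((a + b * x) ^ lam * k ^ (lam / k * b * (y - x)) * (1 - q) ^ (mu / k * b * (y - x)) *
          (Gammaqk q k (a + b * y)) ^ mu) := by
  obtain ⟨hq0, hq1⟩ := hq
  have h1q : (0:ℝ) < 1 - q := by linarith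
  have hbx : 0 < b * x := mul_pos hb hx
  have hbxy : b * x < b * y := mul_lt_mul_of_pos_left hxy hb
  have h2 : 0 < a + b * x := by linarith
  have h3 : 0 < a + b * y := by linarith
  have h12 : a < a + b * x := by linarith
  have h23 : a + b * x < a + b * y := by linarith
  have hGka : 0 < Gammak k a := Gammak_pos hk ha
  have hGk2 : 0 < Gammak k (a + b * x) := Gammak_pos hk h2
  have hGk3 : 0 < Gammak k (a + b * y) := Gammak_pos hk h3
  have hGqa : 0 < Gammaqk q k a := Gammaqk_pos hq1
  have hGq2 : 0 < Gammaqk q k (a + b * x) := Gammaqk_pos hq1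
  have hGq3 : 0 < Gammaqk q k (a + b * y) := Gammaqk_pos hq1
  have K1 := log_Gammak_gt hk ha h12
  have K2 := log_Gammak_gt hk h2 h23
  have Q1 := log_Gammaqk_lt hq0 hq1 hk ha h12
  have Q2 := log_Gammaqk_lt hq0 hq1 hk h2 h23
  have K1' := (mul_lt_mul_iff_right₀ hlam).mpr K1
  have K2' := (mul_lt_mul_iff_right₀ hlam).mpr K2
  have Q1' := (mul_lt_mul_iff_right₀ hmu).mpr Q1
  have Q2' := (mul_lt_mul_iff_right₀ hmu).mpr Q2
  constructor
  · rw [Real.rpow_def_of_pos ha, Real.rpow_def_of_pos h2, Real.rpow_def_of_pos hk,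
      Real.rpow_def_of_pos h1q, Real.rpow_def_of_pos hGka, Real.rpow_def_of_pos hGqa,
      Real.rpow_def_of_pos hGk2, Real.rpow_def_of_pos hGq2]
    simp only [← Real.exp_add, ← Real.exp_sub]
    apply Real.exp_lt_exp.mpr
    ring_nf at K1' Q1' ⊢
    linarith
  · rw [Real.rpow_def_of_pos h2, Real.rpow_def_of_pos h3, Real.rpow_def_of_pos hk,
      Real.rpow_def_of_pos h1q, Real.rpow_def_of_pos hGk2, Real.rpow_def_of_pos hGq2,
      Real.rpow_def_of_pos hGk3, Real.rpow_def_of_pos hGq3]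
    simp only [← Real.exp_add, ← Real.exp_sub]
    apply Real.exp_lt_exp.mpr
    ring_nf at K2' Q2' ⊢
    linarith
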